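/- Let F be a field of characteristic p > 0 and n ≥ 1. Then the 2n central elements x_1^p,…,x_n^p, y_1^p,…,y_n^p of the Weyl algebra A_n(F) are algebraically independent over F; consequently the center Z(A_n(F)) is isomorphic as an F-algebra to the polynomial ring in 2n variables F[z_1,…,z_{2n}] (MvPolynomial (Fin (2n)) F). -/

import Mathlib

set_option synthInstance.maxHeartbeats 1000000
set_option maxHeartbeats 4000000

open scoped nonZeroDivisors
open Matrix

/-- The defining relations of the `n`-th Weyl algebra, on generators indexed by
`Fin n ⊕ Fin n` (`Sum.inl i ↦ xᵢ`, `Sum.inr i ↦ yᵢ`):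
`xᵢxⱼ = xⱼxᵢ`, `yᵢyⱼ = yⱼyᵢ`, `yᵢxⱼ = xⱼyᵢ + δᵢⱼ`. -/
inductive WeylRel (R : Type*) [CommRing R] (n : ℕ) :
    FreeAlgebra R (Fin n ⊕ Fin n) → FreeAlgebra R (Fin n ⊕ Fin n) → Prop
  | xx (i j : Fin n) : WeylRel R n
      (FreeAlgebra.ι R (Sum.inl i) * FreeAlgebra.ι R (Sum.inl j))
      (FreeAlgebra.ι R (Sum.inl j) * FreeAlgebra.ι R (Sum.inl i))
  | yy (i j : Fin n) : WeylRel R n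
      (FreeAlgebra.ι R (Sum.inr i) * FreeAlgebra.ι R (Sum.inr j))
      (FreeAlgebra.ι R (Sum.inr j) * FreeAlgebra.ι R (Sum.inr i))
  | yx (i j : Fin n) : WeylRel R n
      (FreeAlgebra.ι R (Sum.inr i) * FreeAlgebra.ι R (Sum.inl j))
      (FreeAlgebra.ι R (Sum.inl j) * FreeAlgebra.ι R (Sum.inr i)
        + if i = j then 1 else 0)

/-- The `n`-th Weyl algebra `A_n(R)`. -/
abbrev WeylAlgebra (R : Type*) [CommRing R] (n : ℕ) : Type _ := RingQuot (WeylRel R n)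

/-- The generator `xᵢ` of the Weyl algebra. -/
noncomputable def wX (R : Type*) [CommRing R] (n : ℕ) (i : Fin n) : WeylAlgebra R n :=
  RingQuot.mkAlgHom R (WeylRel R n) (FreeAlgebra.ι R (Sum.inl i))

/-- The generator `yᵢ` of the Weyl algebra. -/
noncomputable def wY (R : Type*) [CommRing R] (n : ℕ) (i : Fin n) : WeylAlgebra R n :=
  RingQuot.mkAlgHom R (WeylRel R n) (FreeAlgebra.ι R (Sum.inr i))

/-- The skew field of fractions `Frac(A_n(F))` of the Weyl algebra, realized as the Ore
localization of `A_n(F)` at the Ore set of its nonzero elements (it is a division ring,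
given that `A_n(F)` is a noetherian domain). -/
abbrev WeylFrac (F : Type*) [Field F] (n : ℕ)
    [OreLocalization.OreSet (WeylAlgebra F n)⁰] : Type _ :=
  OreLocalization (WeylAlgebra F n)⁰ (WeylAlgebra F n)

/-- The canonical inclusion of the Weyl algebra into its skew field of fractions. -/
noncomputable def weylToFrac (F : Type*) [Field F] (n : ℕ)
    [OreLocalization.OreSet (WeylAlgebra F n)⁰] :
    WeylAlgebra F n →+* WeylFrac F n :=
  OreLocalization.numeratorRingHom

section Fixed
variable {G : Type*} [Group G]

/-- The fixed subalgebra (`Q^G`) of an action of `G` by `F`-algebra automorphisms. -/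
def fixedSubalgebra (F : Type*) {Q : Type*} [CommSemiring F] [Semiring Q] [Algebra F Q]
    (ρ : G →* (Q ≃ₐ[F] Q)) : Subalgebra F Q where
  carrier := {a | ∀ g, ρ g a = a}
  algebraMap_mem' := fun r g => (ρ g).commutes r
  add_mem' := fun ha hb g => by rw [_root_.map_add, ha g, hb g]
  mul_mem' := fun ha hb g => by rw [_root_.map_mul, ha g, hb g]

/-- The fixed sub-division-ring (`Q^G`) of an action of `G` by `F`-algebra automorphisms
of a division ring, as a `Subfield` in Mathlib's sense (a sub-division-ring). -/
def fixedSubfield (F : Type*) {Q : Type*} [CommSemiring F] [DivisionRing Q] [Algebra F Q]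
    (ρ : G →* (Q ≃ₐ[F] Q)) : Subfield Q where
  carrier := {a | ∀ g, ρ g a = a}
  one_mem' := fun g => map_one _
  zero_mem' := fun g => map_zero _
  add_mem' := fun ha hb g => by rw [_root_.map_add, ha g, hb g]
  mul_mem' := fun ha hb g => by rw [_root_.map_mul, ha g, hb g]
  neg_mem' := fun ha g => by rw [map_neg, ha g]
  inv_mem' := fun a ha g => by rw [map_inv₀, ha g]

end Fixed

/-- A field extension `K/F` is *stably rational over `F`* if some rational function field
`K(t₁,…,t_m)` over `K` is isomorphic, as an `F`-algebra, to a rational function field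
`F(z₁,…,z_N)` over `F` in finitely many variables. -/
def IsStablyRational (F K : Type*) [Field F] [Field K] [Algebra F K] : Prop :=
  ∃ m N : ℕ, Nonempty
    (FractionRing (MvPolynomial (Fin m) K) ≃ₐ[F] FractionRing (MvPolynomial (Fin N) F))

section Actions

variable {F : Type*} [Field F] {n : ℕ}

/-- `ρ` is the symplectic action of the subgroup `G ≤ GLₙ(F)` on `Frac(A_n(F))`:
`g` maps `xⱼ` to `∑ᵢ gᵢⱼ xᵢ` and `yⱼ` to `∑ᵢ ((gᵀ)⁻¹)ᵢⱼ yᵢ = ∑ᵢ (g⁻¹)ⱼᵢ yᵢ`.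
(Such an action exists and is unique, since the extension of the linear action from
`A_n(F)` to its skew field of fractions is unique.) -/
def IsWeylFracAction [OreLocalization.OreSet (WeylAlgebra F n)⁰]
    (G : Subgroup (GL (Fin n) F)) (ρ : G →* (WeylFrac F n ≃ₐ[F] WeylFrac F n)) : Prop :=
  ∀ g : G,
    (∀ j, ρ g (weylToFrac F n (wX F n j)) =
      ∑ i, ((g : GL (Fin n) F) : Matrix (Fin n) (Fin n) F) i j • weylToFrac F n (wX F n i)) ∧
    (∀ j, ρ g (weylToFrac F n (wY F n j)) =
      ∑ i, (((g : GL (Fin n) F)⁻¹ : GL (Fin n) F) : Matrix (Fin n) (Fin n) F) j i •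
        weylToFrac F n (wY F n i))

/-- `ρ` is the symplectic action of a subgroup `G ≤ GLₙ(ℤ)` on `Frac(A_n(F))`, acting
through the (entrywise) reduction map `GLₙ(ℤ) → GLₙ(F)`. -/
def IsWeylFracActionInt [OreLocalization.OreSet (WeylAlgebra F n)⁰]
    (G : Subgroup (GL (Fin n) ℤ)) (ρ : G →* (WeylFrac F n ≃ₐ[F] WeylFrac F n)) : Prop :=
  ∀ g : G,
    (∀ j, ρ g (weylToFrac F n (wX F n j)) =
      ∑ i, (((g : GL (Fin n) ℤ) : Matrix (Fin n) (Fin n) ℤ) i j : F) •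
        weylToFrac F n (wX F n i)) ∧
    (∀ j, ρ g (weylToFrac F n (wY F n j)) =
      ∑ i, ((((g : GL (Fin n) ℤ)⁻¹ : GL (Fin n) ℤ) : Matrix (Fin n) (Fin n) ℤ) j i : F) •
        weylToFrac F n (wY F n i))

/-- `ρ` is the linear action of the subgroup `G ≤ GLₙ(F)` on the rational function field
`F(x₁,…,xₙ)`: `g` maps `xⱼ` to `∑ᵢ gᵢⱼ xᵢ`. -/
def IsMvRatAction (G : Subgroup (GL (Fin n) F))
    (ρ : G →* (FractionRing (MvPolynomial (Fin n) F) ≃ₐ[F]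
      FractionRing (MvPolynomial (Fin n) F))) : Prop :=
  ∀ g : G, ∀ j,
    ρ g (algebraMap (MvPolynomial (Fin n) F) (FractionRing (MvPolynomial (Fin n) F))
        (MvPolynomial.X j)) =
      ∑ i, ((g : GL (Fin n) F) : Matrix (Fin n) (Fin n) F) i j •
        algebraMap (MvPolynomial (Fin n) F) (FractionRing (MvPolynomial (Fin n) F))
          (MvPolynomial.X i)

/-- `ρ` is the linear action of a subgroup `G ≤ GLₙ(ℤ)` on the rational function field
`F(x₁,…,xₙ)`, acting through the (entrywise) reduction map `GLₙ(ℤ) → GLₙ(F)`. -/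
def IsMvRatActionInt (G : Subgroup (GL (Fin n) ℤ))
    (ρ : G →* (FractionRing (MvPolynomial (Fin n) F) ≃ₐ[F]
      FractionRing (MvPolynomial (Fin n) F))) : Prop :=
  ∀ g : G, ∀ j,
    ρ g (algebraMap (MvPolynomial (Fin n) F) (FractionRing (MvPolynomial (Fin n) F))
        (MvPolynomial.X j)) =
      ∑ i, (((g : GL (Fin n) ℤ) : Matrix (Fin n) (Fin n) ℤ) i j : F) •
        algebraMap (MvPolynomial (Fin n) F) (FractionRing (MvPolynomial (Fin n) F))
          (MvPolynomial.X i)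

end Actions

/-- The family `x₁ᵖ,…,xₙᵖ, y₁ᵖ,…,yₙᵖ` of elements of the Weyl algebra `A_n(F)`,
indexed by `Fin n ⊕ Fin n`. -/
noncomputable def weylPthPowers (F : Type*) [Field F] (n p : ℕ) :
    Fin n ⊕ Fin n → WeylAlgebra F n
  | Sum.inl i => wX F n i ^ p
  | Sum.inr i => wY F n i ^ p

namespace WeylCenter

open MvPolynomial

variable {F : Type*} [Field F] {n : ℕ}

theorem wXX (i j : Fin n) : wX F n i * wX F n j = wX F n j * wX F n i := by
  simpa only [wX, _root_.map_mul] using RingQuot.mkAlgHom_rel F (WeylRel.xx (R := F) (n := n) i j)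

theorem wYY (i j : Fin n) : wY F n i * wY F n j = wY F n j * wY F n i := by
  simpa only [wY, _root_.map_mul] using RingQuot.mkAlgHom_rel F (WeylRel.yy (R := F) (n := n) i j)

theorem wYX (i j : Fin n) :
    wY F n i * wX F n j = wX F n j * wY F n i + if i = j then 1 else 0 := by
  have := RingQuot.mkAlgHom_rel F (WeylRel.yx (R := F) (n := n) i j)
  simp only [_root_.map_mul, _root_.map_add, apply_ite (RingQuot.mkAlgHom F (WeylRel F n)), _root_.map_one,
    _root_.map_zero] at this
  simpa only [wX, wY, _root_.map_mul] using this

/-- algebra morphism from a polynomial ring given a pairwise commuting family -/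
noncomputable def aevalComm {ι : Type*} (f : ι → WeylAlgebra F n)
    (h : ∀ a ∈ Set.range f, ∀ b ∈ Set.range f, a * b = b * a) :
    MvPolynomial ι F →ₐ[F] WeylAlgebra F n :=
  letI : CommRing (Algebra.adjoin F (Set.range f)) := Algebra.adjoinCommRingOfComm F h
  (Algebra.adjoin F (Set.range f)).val.comp
    (MvPolynomial.aeval fun i =>
      (⟨f i, Algebra.subset_adjoin (Set.mem_range_self i)⟩ : Algebra.adjoin F (Set.range f)))

theorem aevalComm_X {ι : Type*} (f : ι → WeylAlgebra F n) (h) (i : ι) :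
    aevalComm f h (X i) = f i := by
  simp [aevalComm]

theorem comm_range_wX : ∀ a ∈ Set.range (wX F n), ∀ b ∈ Set.range (wX F n), a * b = b * a := by
  rintro a ⟨i, rfl⟩ b ⟨j, rfl⟩; exact wXX i j

theorem comm_range_wY : ∀ a ∈ Set.range (wY F n), ∀ b ∈ Set.range (wY F n), a * b = b * a := by
  rintro a ⟨i, rfl⟩ b ⟨j, rfl⟩; exact wYY i j

/-- evaluation of a polynomial at the commuting family `x₁,…,xₙ` -/
noncomputable def ξx (F : Type*) [Field F] (n : ℕ) :
    MvPolynomial (Fin n) F →ₐ[F] WeylAlgebra F n := aevalComm (wX F n) comm_range_wX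

/-- evaluation of a polynomial at the commuting family `y₁,…,yₙ` -/
noncomputable def ξy (F : Type*) [Field F] (n : ℕ) :
    MvPolynomial (Fin n) F →ₐ[F] WeylAlgebra F n := aevalComm (wY F n) comm_range_wY

@[simp] theorem ξx_X (i : Fin n) : ξx F n (X i) = wX F n i := aevalComm_X _ _ i
@[simp] theorem ξy_X (i : Fin n) : ξy F n (X i) = wY F n i := aevalComm_X _ _ i

theorem ξx_comm (f g : MvPolynomial (Fin n) F) :
    ξx F n f * ξx F n g = ξx F n g * ξx F n f := by
  rw [← _root_.map_mul, ← _root_.map_mul, mul_comm]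

theorem ξy_comm (f g : MvPolynomial (Fin n) F) :
    ξy F n f * ξy F n g = ξy F n g * ξy F n f := by
  rw [← _root_.map_mul, ← _root_.map_mul, mul_comm]

/-- commuting `yⱼ` past a polynomial in the `x`'s produces a derivative term -/
theorem wY_mul_ξx (j : Fin n) (f : MvPolynomial (Fin n) F) :
    wY F n j * ξx F n f = ξx F n f * wY F n j + ξx F n (pderiv j f) := by
  induction f using MvPolynomial.induction_on with
  | C a =>
    rw [pderiv_C, _root_.map_zero, add_zero,
      show (C a : MvPolynomial (Fin n) F) = algebraMap F _ a from rfl, AlgHom.commutes]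
    exact (Algebra.commutes a _).symm
  | add f g hf hg =>
    rw [_root_.map_add, _root_.map_add, mul_add, add_mul, hf, hg, _root_.map_add]
    try simp only [if_true, mul_add, mul_sub, mul_one, smul_zero, mul_zero, add_zero, ← mul_assoc]
    abel
  | mul_X f i hf =>
    rw [_root_.map_mul, ξx_X, ← mul_assoc, hf, pderiv_mul, _root_.map_add, _root_.map_mul,
      _root_.map_mul, ξx_X, add_mul, mul_assoc, wYX j i]
    by_cases hij : j = i
    · subst hij; simp only [pderiv_X_self, _root_.map_one, if_pos rfl]
      try simp only [if_true, mul_add, mul_sub, mul_one, smul_zero, mul_zero, add_zero, sub_zero, ← mul_assoc]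
      try abel
    · simp only [pderiv_X_of_ne (fun h => hij h.symm), _root_.map_zero, if_neg hij]
      try simp only [if_true, mul_add, mul_sub, mul_one, smul_zero, mul_zero, add_zero, sub_zero, ← mul_assoc]
      try abel

/-- commuting `xⱼ` past a polynomial in the `y`'s produces a derivative term -/
theorem wX_mul_ξy (j : Fin n) (g : MvPolynomial (Fin n) F) :
    wX F n j * ξy F n g = ξy F n g * wX F n j - ξy F n (pderiv j g) := by
  induction g using MvPolynomial.induction_on with
  | C a =>
    rw [pderiv_C, _root_.map_zero, sub_zero,
      show (C a : MvPolynomial (Fin n) F) = algebraMap F _ a from rfl, AlgHom.commutes]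
    exact (Algebra.commutes a _).symm
  | add f g hf hg =>
    rw [_root_.map_add, _root_.map_add, mul_add, add_mul, hf, hg, _root_.map_add]
    try simp only [if_true, mul_add, mul_sub, mul_one, smul_zero, mul_zero, add_zero, ← mul_assoc]
    abel
  | mul_X g i hg =>
    have hyx : wX F n j * wY F n i = wY F n i * wX F n j - if i = j then 1 else 0 := by
      rw [eq_sub_iff_add_eq, ← wYX i j]
    rw [_root_.map_mul, ξy_X, ← mul_assoc, hg, pderiv_mul, _root_.map_add, _root_.map_mul,
      _root_.map_mul, ξy_X, sub_mul, mul_assoc, hyx]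
    by_cases hij : i = j
    · subst hij; simp only [pderiv_X_self, _root_.map_one, if_pos rfl]
      try simp only [if_true, mul_add, mul_sub, mul_one, smul_zero, mul_zero, add_zero, sub_zero, ← mul_assoc]
      try abel
    · simp only [pderiv_X_of_ne hij, _root_.map_zero, if_neg hij]
      try simp only [if_true, mul_add, mul_sub, mul_one, smul_zero, mul_zero, add_zero,
        sub_zero, ← mul_assoc]
      try abel


/-! ### The faithful polynomial representation -/

variable (F n) in
/-- multiplication operator -/
noncomputable def Sop (s : Fin n ⊕ Fin n) : Module.End F (MvPolynomial (Fin n ⊕ Fin n) F) :=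
  Algebra.lmul F (MvPolynomial (Fin n ⊕ Fin n) F) (X s)

variable (F n) in
/-- differentiation operator -/
noncomputable def Dop (i : Fin n) : Module.End F (MvPolynomial (Fin n ⊕ Fin n) F) :=
  (pderiv (R := F) (Sum.inl i)).toLinearMap

@[simp] theorem Sop_apply (s : Fin n ⊕ Fin n) (g : MvPolynomial (Fin n ⊕ Fin n) F) :
    Sop F n s g = X s * g := rfl

@[simp] theorem Dop_apply (i : Fin n) (g : MvPolynomial (Fin n ⊕ Fin n) F) :
    Dop F n i g = pderiv (Sum.inl i) g := rfl

theorem Sop_mul_Sop (s t : Fin n ⊕ Fin n) : Sop F n s * Sop F n t = Sop F n t * Sop F n s := by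
  refine LinearMap.ext fun g => ?_
  show X s * (X t * g) = X t * (X s * g)
  ring

theorem Dop_mul_Dop (i j : Fin n) : Dop F n i * Dop F n j = Dop F n j * Dop F n i := by
  refine LinearMap.ext fun q => ?_
  induction q using MvPolynomial.induction_on' with
  | add f g hf hg => simp only [Module.End.mul_apply, Dop_apply] at hf hg ⊢
                     simp [hf, hg]
  | monomial d c =>
    simp only [Module.End.mul_apply, Dop_apply, pderiv_monomial]
    by_cases hij : i = j
    · subst hij; rfl
    · have h1 : (d - Finsupp.single (Sum.inl j) 1 : (Fin n ⊕ Fin n) →₀ ℕ) (Sum.inl i)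
          = d (Sum.inl i) := by
        rw [Finsupp.tsub_apply, Finsupp.single_apply,
          if_neg (by simpa using fun h => hij (Eq.symm h)), Nat.sub_zero]
      have h2 : (d - Finsupp.single (Sum.inl i) 1 : (Fin n ⊕ Fin n) →₀ ℕ) (Sum.inl j)
          = d (Sum.inl j) := by
        rw [Finsupp.tsub_apply, Finsupp.single_apply,
          if_neg (by simpa using hij), Nat.sub_zero]
      have h3 : d - Finsupp.single (Sum.inl j) 1 - Finsupp.single (Sum.inl i) 1
          = d - Finsupp.single (Sum.inl i) 1 - Finsupp.single (Sum.inl j) 1 := by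
        ext a; simp only [Finsupp.tsub_apply]; omega
      rw [h1, h2, h3]; ring_nf

theorem Dop_mul_Sop (i : Fin n) (s : Fin n ⊕ Fin n) :
    Dop F n i * Sop F n s = Sop F n s * Dop F n i + if s = Sum.inl i then 1 else 0 := by
  ext g
  by_cases hs : s = Sum.inl i
  · subst hs
    simp [Module.End.mul_apply, pderiv_mul, add_comm, mul_comm]
  · simp [Module.End.mul_apply, pderiv_mul, pderiv_X_of_ne hs, hs]

variable (F n) in
/-- the operator family defining the representation: `xᵢ` acts as multiplication by `X (inl i)`,
`yᵢ` acts as `∂/∂(X (inl i)) + ` multiplication by `X (inr i)`. -/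
noncomputable def weylOp : Fin n ⊕ Fin n → Module.End F (MvPolynomial (Fin n ⊕ Fin n) F)
  | Sum.inl i => Sop F n (Sum.inl i)
  | Sum.inr i => Dop F n i + Sop F n (Sum.inr i)

theorem weylOp_rel {a b : FreeAlgebra F (Fin n ⊕ Fin n)} (h : WeylRel F n a b) :
    FreeAlgebra.lift F (weylOp F n) a = FreeAlgebra.lift F (weylOp F n) b := by
  induction h with
  | xx i j =>
    simp only [_root_.map_mul, FreeAlgebra.lift_ι_apply, weylOp]
    exact Sop_mul_Sop _ _
  | yy i j =>
    simp only [_root_.map_mul, FreeAlgebra.lift_ι_apply, weylOp]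
    simp only [mul_add, add_mul]
    rw [Dop_mul_Dop i j, Dop_mul_Sop i (Sum.inr j), Dop_mul_Sop j (Sum.inr i),
      Sop_mul_Sop (Sum.inr i) (Sum.inr j)]
    simp only [if_neg (by simp : (Sum.inr j : Fin n ⊕ Fin n) ≠ Sum.inl i),
      if_neg (by simp : (Sum.inr i : Fin n ⊕ Fin n) ≠ Sum.inl j), add_zero]
    abel
  | yx i j =>
    simp only [_root_.map_mul, _root_.map_add, FreeAlgebra.lift_ι_apply, weylOp,
      apply_ite (FreeAlgebra.lift F (weylOp F n)), _root_.map_one, _root_.map_zero]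
    simp only [mul_add, add_mul]
    rw [Dop_mul_Sop i (Sum.inl j), Sop_mul_Sop (Sum.inr i) (Sum.inl j)]
    by_cases hij : i = j
    · subst hij; simp only [if_pos rfl]; abel
    · have h1 : (Sum.inl j : Fin n ⊕ Fin n) ≠ Sum.inl i := by simpa using Ne.symm hij
      rw [if_neg h1, if_neg hij, add_zero, add_zero]

variable (F n) in
/-- the representation of the Weyl algebra on polynomials -/
noncomputable def Φ : WeylAlgebra F n →ₐ[F] Module.End F (MvPolynomial (Fin n ⊕ Fin n) F) :=
  RingQuot.liftAlgHom F ⟨FreeAlgebra.lift F (weylOp F n), fun _ _ h => weylOp_rel h⟩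

theorem Φ_wX (i : Fin n) : Φ F n (wX F n i) = Sop F n (Sum.inl i) := by
  rw [wX, Φ, RingQuot.liftAlgHom_mkAlgHom_apply, FreeAlgebra.lift_ι_apply]; rfl

theorem Φ_wY (i : Fin n) : Φ F n (wY F n i) = Dop F n i + Sop F n (Sum.inr i) := by
  rw [wY, Φ, RingQuot.liftAlgHom_mkAlgHom_apply, FreeAlgebra.lift_ι_apply]; rfl


/-! ### PBW-type basis -/

variable (n) in
/-- left component of a multidegree -/
noncomputable def dL (d : (Fin n ⊕ Fin n) →₀ ℕ) : Fin n →₀ ℕ :=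
  Finsupp.equivFunOnFinite.symm fun i => d (Sum.inl i)

variable (n) in
/-- right component of a multidegree -/
noncomputable def dR (d : (Fin n ⊕ Fin n) →₀ ℕ) : Fin n →₀ ℕ :=
  Finsupp.equivFunOnFinite.symm fun i => d (Sum.inr i)

@[simp] theorem dL_apply (d : (Fin n ⊕ Fin n) →₀ ℕ) (i : Fin n) : dL n d i = d (Sum.inl i) := rfl
@[simp] theorem dR_apply (d : (Fin n ⊕ Fin n) →₀ ℕ) (i : Fin n) : dR n d i = d (Sum.inr i) := rfl

variable (F n) in
/-- the normally ordered monomial `x^a y^b` -/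
noncomputable def Nmon (d : (Fin n ⊕ Fin n) →₀ ℕ) : WeylAlgebra F n :=
  ξx F n (monomial (dL n d) 1) * ξy F n (monomial (dR n d) 1)

variable (F n) in
/-- the PBW linear map sending each commutative monomial to its normal ordering -/
noncomputable def Ψ : MvPolynomial (Fin n ⊕ Fin n) F →ₗ[F] WeylAlgebra F n :=
  (MvPolynomial.basisMonomials (Fin n ⊕ Fin n) F).constr F (Nmon F n)

theorem Ψ_monomial (d : (Fin n ⊕ Fin n) →₀ ℕ) (c : F) :
    Ψ F n (monomial d c) = c • Nmon F n d := by
  have hb : (monomial d c : MvPolynomial (Fin n ⊕ Fin n) F)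
      = c • (MvPolynomial.basisMonomials (Fin n ⊕ Fin n) F d) := by
    rw [show (MvPolynomial.basisMonomials (Fin n ⊕ Fin n) F) d = monomial d 1 from
      congrFun (MvPolynomial.coe_basisMonomials _ _) d, smul_monomial, smul_eq_mul, mul_one]
  rw [hb, _root_.map_smul, Ψ, Module.Basis.constr_basis]

theorem Ψ_one : Ψ F n (1 : MvPolynomial (Fin n ⊕ Fin n) F) = 1 := by
  have : (1 : MvPolynomial (Fin n ⊕ Fin n) F) = monomial 0 1 := by
    rw [monomial_zero', C_1]
  rw [this, Ψ_monomial, one_smul, Nmon]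
  have hL : dL n (0 : (Fin n ⊕ Fin n) →₀ ℕ) = 0 := by ext i; simp
  have hR : dR n (0 : (Fin n ⊕ Fin n) →₀ ℕ) = 0 := by ext i; simp
  rw [hL, hR]
  simp only [monomial_zero', C_1, _root_.map_one, one_mul]


theorem dL_single_inl_add (j : Fin n) (m : ℕ) (d : (Fin n ⊕ Fin n) →₀ ℕ) :
    dL n (Finsupp.single (Sum.inl j) m + d) = Finsupp.single j m + dL n d := by
  ext i; simp [Finsupp.single_apply]

theorem dR_single_inl_add (j : Fin n) (m : ℕ) (d : (Fin n ⊕ Fin n) →₀ ℕ) :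
    dR n (Finsupp.single (Sum.inl j) m + d) = dR n d := by
  ext i; simp [Finsupp.single_apply]

theorem dL_single_inr_add (j : Fin n) (m : ℕ) (d : (Fin n ⊕ Fin n) →₀ ℕ) :
    dL n (Finsupp.single (Sum.inr j) m + d) = dL n d := by
  ext i; simp [Finsupp.single_apply]

theorem dR_single_inr_add (j : Fin n) (m : ℕ) (d : (Fin n ⊕ Fin n) →₀ ℕ) :
    dR n (Finsupp.single (Sum.inr j) m + d) = Finsupp.single j m + dR n d := by
  ext i; simp [Finsupp.single_apply]

theorem dL_sub_inl (j : Fin n) (d : (Fin n ⊕ Fin n) →₀ ℕ) :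
    dL n (d - Finsupp.single (Sum.inl j) 1) = dL n d - Finsupp.single j 1 := by
  ext i; simp [Finsupp.tsub_apply, Finsupp.single_apply]

theorem dR_sub_inl (j : Fin n) (d : (Fin n ⊕ Fin n) →₀ ℕ) :
    dR n (d - Finsupp.single (Sum.inl j) 1) = dR n d := by
  ext i; simp [Finsupp.tsub_apply, Finsupp.single_apply]

theorem dL_sub_inr (j : Fin n) (d : (Fin n ⊕ Fin n) →₀ ℕ) :
    dL n (d - Finsupp.single (Sum.inr j) 1) = dL n d := by
  ext i; simp [Finsupp.tsub_apply, Finsupp.single_apply]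

theorem dR_sub_inr (j : Fin n) (d : (Fin n ⊕ Fin n) →₀ ℕ) :
    dR n (d - Finsupp.single (Sum.inr j) 1) = dR n d - Finsupp.single j 1 := by
  ext i; simp [Finsupp.tsub_apply, Finsupp.single_apply]

theorem wXpow_mul_Ψ (j : Fin n) (m : ℕ) (q : MvPolynomial (Fin n ⊕ Fin n) F) :
    wX F n j ^ m * Ψ F n q = Ψ F n (X (Sum.inl j) ^ m * q) := by
  induction q using MvPolynomial.induction_on' with
  | add f g hf hg => rw [_root_.map_add, mul_add, hf, hg, mul_add, _root_.map_add]
  | monomial d c =>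
    rw [Ψ_monomial, ← monomial_single_add, Ψ_monomial, mul_smul_comm, Nmon, Nmon,
      dL_single_inl_add, dR_single_inl_add, monomial_single_add (s := dL n d),
      _root_.map_mul, map_pow, ξx_X, mul_assoc]

theorem Ψ_mul_wYpow (j : Fin n) (m : ℕ) (q : MvPolynomial (Fin n ⊕ Fin n) F) :
    Ψ F n q * wY F n j ^ m = Ψ F n (X (Sum.inr j) ^ m * q) := by
  induction q using MvPolynomial.induction_on' with
  | add f g hf hg => rw [_root_.map_add, add_mul, hf, hg, mul_add, _root_.map_add]
  | monomial d c =>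
    rw [Ψ_monomial, ← monomial_single_add, Ψ_monomial, smul_mul_assoc, Nmon, Nmon,
      dL_single_inr_add, dR_single_inr_add, monomial_single_add (s := dR n d),
      _root_.map_mul, map_pow, ξy_X, mul_assoc]
    rw [show ξy F n (monomial (dR n d) 1) * wY F n j ^ m
        = wY F n j ^ m * ξy F n (monomial (dR n d) 1) by
      rw [← ξy_X, ← map_pow, ξy_comm]]

theorem wY_mul_Ψ (j : Fin n) (q : MvPolynomial (Fin n ⊕ Fin n) F) :
    wY F n j * Ψ F n q = Ψ F n (X (Sum.inr j) * q + pderiv (Sum.inl j) q) := by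
  induction q using MvPolynomial.induction_on' with
  | add f g hf hg =>
    rw [_root_.map_add, mul_add, hf, hg, ← _root_.map_add]
    congr 1
    rw [_root_.map_add]
    ring
  | monomial d c =>
    rw [Ψ_monomial, mul_smul_comm, Nmon, ← mul_assoc, wY_mul_ξx, add_mul, mul_assoc,
      ← ξy_X, ← _root_.map_mul, pderiv_monomial]
    rw [show (X j : MvPolynomial (Fin n) F) * monomial (dR n d) 1
        = monomial (Finsupp.single j 1 + dR n d) 1 by
      rw [monomial_single_add, pow_one]]
    rw [pderiv_monomial, one_mul]
    rw [show (monomial (dL n d - Finsupp.single j 1) ((dL n d j : F)) : MvPolynomial (Fin n) F)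
        = (dL n d j : F) • monomial (dL n d - Finsupp.single j 1) 1 by
      rw [smul_monomial, smul_eq_mul, mul_one]]
    rw [show (X (Sum.inr j) : MvPolynomial (Fin n ⊕ Fin n) F) * monomial d c
        = monomial (Finsupp.single (Sum.inr j) 1 + d) c by
      rw [monomial_single_add, pow_one]]
    rw [_root_.map_smul, smul_mul_assoc, smul_add, _root_.map_add, Ψ_monomial, Ψ_monomial]
    rw [Nmon, dL_single_inr_add, dR_single_inr_add,
      monomial_single_add (s := dR n d), pow_one]
    rw [Nmon, dL_sub_inl, dR_sub_inl, smul_smul, dL_apply, mul_comm c]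

theorem Ψ_mul_wX (j : Fin n) (q : MvPolynomial (Fin n ⊕ Fin n) F) :
    Ψ F n q * wX F n j = Ψ F n (X (Sum.inl j) * q + pderiv (Sum.inr j) q) := by
  induction q using MvPolynomial.induction_on' with
  | add f g hf hg =>
    rw [_root_.map_add, add_mul, hf, hg, ← _root_.map_add]
    congr 1
    rw [_root_.map_add]
    ring
  | monomial d c =>
    have hyx : ξy F n (monomial (dR n d) 1) * wX F n j
        = wX F n j * ξy F n (monomial (dR n d) 1) + ξy F n (pderiv j (monomial (dR n d) 1)) := by
      rw [wX_mul_ξy, sub_add_cancel]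
    have hxx : ξx F n (monomial (dL n d) 1) * wX F n j
        = ξx F n (monomial (Finsupp.single j 1 + dL n d) 1) := by
      rw [← ξx_X j, ← _root_.map_mul, mul_comm]
      congr 1
      rw [monomial_single_add, pow_one]
    rw [Ψ_monomial, smul_mul_assoc, Nmon, mul_assoc, hyx, mul_add, ← mul_assoc, hxx,
      pderiv_monomial, one_mul]
    rw [show (monomial (dR n d - Finsupp.single j 1) ((dR n d j : F)) : MvPolynomial (Fin n) F)
        = (dR n d j : F) • monomial (dR n d - Finsupp.single j 1) 1 by
      rw [smul_monomial, smul_eq_mul, mul_one]]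
    rw [_root_.map_smul, mul_smul_comm, smul_add]
    rw [show (X (Sum.inl j) : MvPolynomial (Fin n ⊕ Fin n) F) * monomial d c
        = monomial (Finsupp.single (Sum.inl j) 1 + d) c by
      rw [monomial_single_add, pow_one]]
    rw [pderiv_monomial, _root_.map_add, Ψ_monomial, Ψ_monomial]
    rw [Nmon, dL_single_inl_add, dR_single_inl_add,
      monomial_single_add (s := dL n d), pow_one]
    rw [Nmon, dL_sub_inr, dR_sub_inr, smul_smul, dR_apply, mul_comm c]


/-! ### Faithfulness -/

theorem Φ_ξx (f : MvPolynomial (Fin n) F) :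
    Φ F n (ξx F n f)
      = Algebra.lmul F (MvPolynomial (Fin n ⊕ Fin n) F) (rename Sum.inl f) := by
  have h : (Φ F n).comp (ξx F n)
      = (Algebra.lmul F (MvPolynomial (Fin n ⊕ Fin n) F)).comp (rename Sum.inl) := by
    apply MvPolynomial.algHom_ext
    intro i
    simp only [AlgHom.comp_apply, ξx_X, rename_X, Φ_wX]
    rfl
  exact DFunLike.congr_fun h f

theorem pderiv_inl_rename (i : Fin n) (g : MvPolynomial (Fin n) F) :
    pderiv (Sum.inl i) (rename Sum.inr g) = 0 := by
  classical
  apply pderiv_eq_zero_of_notMem_vars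
  intro hmem
  obtain ⟨j, -, hj⟩ := Finset.mem_image.mp (vars_rename Sum.inr g hmem)
  exact Sum.inl_ne_inr hj.symm

theorem Φ_ξy_apply (g : MvPolynomial (Fin n) F) :
    ∀ h : MvPolynomial (Fin n ⊕ Fin n) F, (∀ i, pderiv (Sum.inl i) h = 0) →
      Φ F n (ξy F n g) h = rename Sum.inr g * h := by
  induction g using MvPolynomial.induction_on with
  | C a =>
    intro h hh
    rw [show (C a : MvPolynomial (Fin n) F) = algebraMap F _ a from rfl, AlgHom.commutes,
      AlgHom.commutes, (rename (R := F) (Sum.inr : Fin n → Fin n ⊕ Fin n)).commutes,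
      Module.algebraMap_end_apply, ← Algebra.smul_def]
  | add f g hf hg =>
    intro h hh
    rw [_root_.map_add, _root_.map_add, _root_.map_add, LinearMap.add_apply, hf h hh, hg h hh,
      add_mul]
  | mul_X g i hg =>
    intro h hh
    have h1 : Φ F n (wY F n i) h = X (Sum.inr i) * h := by
      rw [Φ_wY, LinearMap.add_apply, Dop_apply, Sop_apply, hh i, zero_add]
    have h2 : ∀ j : Fin n, pderiv (Sum.inl j) (X (Sum.inr i) * h) = 0 := by
      intro j
      rw [pderiv_mul, hh j, pderiv_X_of_ne (by simp : (Sum.inr i : Fin n ⊕ Fin n) ≠ Sum.inl j),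
        zero_mul, mul_zero, add_zero]
    rw [_root_.map_mul, _root_.map_mul, ξy_X, Module.End.mul_apply, h1, hg _ h2,
      _root_.map_mul, rename_X, mul_assoc]

theorem Φ_Ψ_one (q : MvPolynomial (Fin n ⊕ Fin n) F) : Φ F n (Ψ F n q) 1 = q := by
  induction q using MvPolynomial.induction_on' with
  | add f g hf hg => rw [_root_.map_add, _root_.map_add, LinearMap.add_apply, hf, hg]
  | monomial d c =>
    rw [Ψ_monomial, _root_.map_smul, LinearMap.smul_apply, Nmon, _root_.map_mul,
      Module.End.mul_apply, Φ_ξy_apply _ 1 (fun i => pderiv_one), mul_one, Φ_ξx]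
    rw [show Algebra.lmul F (MvPolynomial (Fin n ⊕ Fin n) F)
        (rename Sum.inl (monomial (dL n d) 1)) (rename Sum.inr (monomial (dR n d) 1))
      = rename Sum.inl (monomial (dL n d) 1) * rename Sum.inr (monomial (dR n d) 1) from rfl]
    rw [rename_monomial, rename_monomial, monomial_mul, mul_one]
    have hd : Finsupp.mapDomain Sum.inl (dL n d) + Finsupp.mapDomain Sum.inr (dR n d) = d := by
      ext s
      rw [Finsupp.add_apply]
      cases s with
      | inl i =>
        rw [Finsupp.mapDomain_apply Sum.inl_injective,
          Finsupp.mapDomain_notin_range _ _ (by simp), dL_apply, add_zero]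
      | inr i =>
        rw [Finsupp.mapDomain_apply Sum.inr_injective,
          Finsupp.mapDomain_notin_range _ _ (by simp), dR_apply, zero_add]
    rw [hd, smul_monomial, smul_eq_mul, mul_one]

theorem Ψ_injective : Function.Injective (Ψ F n) := by
  intro q1 q2 h
  have := congrArg (fun w => Φ F n w 1) h
  simpa only [Φ_Ψ_one] using this

theorem Ψ_surjective : Function.Surjective (Ψ F n) := by
  have key : ∀ v : FreeAlgebra F (Fin n ⊕ Fin n),
      ∀ q : MvPolynomial (Fin n ⊕ Fin n) F, ∃ q',
        Ψ F n q' = RingQuot.mkAlgHom F (WeylRel F n) v * Ψ F n q := by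
    intro v
    induction v using FreeAlgebra.induction with
    | grade0 r =>
      intro q
      exact ⟨r • q, by rw [_root_.map_smul, AlgHom.commutes, Algebra.smul_def]⟩
    | grade1 s =>
      cases s with
      | inl j => exact fun q => ⟨X (Sum.inl j) * q, by
          rw [show (X (Sum.inl j) : MvPolynomial (Fin n ⊕ Fin n) F) * q
            = X (Sum.inl j) ^ 1 * q by rw [pow_one], ← wXpow_mul_Ψ, pow_one]; rfl⟩
      | inr j => exact fun q => ⟨X (Sum.inr j) * q + pderiv (Sum.inl j) q, by
          rw [← wY_mul_Ψ]; rfl⟩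
    | mul a b ha hb =>
      intro q
      obtain ⟨q1, hq1⟩ := hb q
      obtain ⟨q2, hq2⟩ := ha q1
      exact ⟨q2, by rw [hq2, hq1, _root_.map_mul, mul_assoc]⟩
    | add a b ha hb =>
      intro q
      obtain ⟨q1, hq1⟩ := ha q
      obtain ⟨q2, hq2⟩ := hb q
      exact ⟨q1 + q2, by rw [_root_.map_add, hq1, hq2, _root_.map_add, add_mul]⟩
  intro w
  obtain ⟨v, rfl⟩ := RingQuot.mkAlgHom_surjective F (WeylRel F n) w
  obtain ⟨q, hq⟩ := key v 1
  exact ⟨q, by rwa [Ψ_one, mul_one] at hq⟩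


/-! ### The center -/

theorem mem_center_of (z : WeylAlgebra F n) (hx : ∀ j, wX F n j * z = z * wX F n j)
    (hy : ∀ j, wY F n j * z = z * wY F n j) :
    z ∈ Subalgebra.center F (WeylAlgebra F n) := by
  rw [Subalgebra.mem_center_iff]
  intro b
  obtain ⟨v, rfl⟩ := RingQuot.mkAlgHom_surjective F (WeylRel F n) b
  induction v using FreeAlgebra.induction with
  | grade0 r => rw [AlgHom.commutes]; exact Algebra.commutes r z
  | grade1 s =>
    cases s with
    | inl j => exact hx j
    | inr j => exact hy j
  | mul a b ha hb =>
    rw [_root_.map_mul, mul_assoc, hb, ← mul_assoc, ha, mul_assoc]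
  | add a b ha hb => rw [_root_.map_add, add_mul, mul_add, ha, hb]

section CharP

variable (p : ℕ) [CharP F p]

theorem pderiv_X_pow (s : Fin n) (i : Fin n) :
    pderiv s ((X i : MvPolynomial (Fin n) F) ^ p) = 0 := by
  rw [pderiv_pow, CharP.cast_eq_zero (MvPolynomial (Fin n) F) p, zero_mul, zero_mul]

theorem wX_pow_mem_center (j : Fin n) :
    wX F n j ^ p ∈ Subalgebra.center F (WeylAlgebra F n) := by
  have hx : wX F n j ^ p = ξx F n (X j ^ p) := by rw [map_pow, ξx_X]
  refine mem_center_of _ (fun i => ?_) (fun i => ?_)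
  · rw [hx, ← ξx_X i, ξx_comm]
  · rw [hx, wY_mul_ξx, pderiv_X_pow, _root_.map_zero, add_zero]

theorem wY_pow_mem_center (j : Fin n) :
    wY F n j ^ p ∈ Subalgebra.center F (WeylAlgebra F n) := by
  have hy : wY F n j ^ p = ξy F n (X j ^ p) := by rw [map_pow, ξy_X]
  refine mem_center_of _ (fun i => ?_) (fun i => ?_)
  · rw [hy, wX_mul_ξy, pderiv_X_pow, _root_.map_zero, sub_zero]
  · rw [hy, ← ξy_X i, ξy_comm]

end CharP

/-! ### Expansion by p-th powers -/

section Expand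

variable (F) in
/-- the linear map `monomial d c ↦ monomial (p • d) c` -/
noncomputable def expL {σ : Type*} (p : ℕ) : MvPolynomial σ F →ₗ[F] MvPolynomial σ F :=
  (MvPolynomial.basisMonomials σ F).constr F fun d => monomial (p • d) 1

variable (F) in
/-- the linear map `monomial d c ↦ monomial (d / p) c` -/
noncomputable def conL {σ : Type*} (p : ℕ) : MvPolynomial σ F →ₗ[F] MvPolynomial σ F :=
  (MvPolynomial.basisMonomials σ F).constr F fun d =>
    monomial (Finsupp.mapRange (· / p) (Nat.zero_div p) d) 1

theorem expL_monomial {σ : Type*} (p : ℕ) (d : σ →₀ ℕ) (c : F) :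
    expL F p (monomial d c) = monomial (p • d) c := by
  have hb : (monomial d c : MvPolynomial σ F)
      = c • (MvPolynomial.basisMonomials σ F d) := by
    rw [show (MvPolynomial.basisMonomials σ F) d = monomial d 1 from
      congrFun (MvPolynomial.coe_basisMonomials _ _) d, smul_monomial, smul_eq_mul, mul_one]
  rw [hb, _root_.map_smul, expL, Module.Basis.constr_basis, smul_monomial, smul_eq_mul, mul_one]

theorem conL_monomial {σ : Type*} (p : ℕ) (d : σ →₀ ℕ) (c : F) :
    conL F p (monomial d c) = monomial (Finsupp.mapRange (· / p) (Nat.zero_div p) d) c := by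
  have hb : (monomial d c : MvPolynomial σ F)
      = c • (MvPolynomial.basisMonomials σ F d) := by
    rw [show (MvPolynomial.basisMonomials σ F) d = monomial d 1 from
      congrFun (MvPolynomial.coe_basisMonomials _ _) d, smul_monomial, smul_eq_mul, mul_one]
  rw [hb, _root_.map_smul, conL, Module.Basis.constr_basis, smul_monomial, smul_eq_mul, mul_one]

theorem expL_injective {σ : Type*} {p : ℕ} (hp : 0 < p) :
    Function.Injective (expL F (σ := σ) p) := by
  have key : ∀ q : MvPolynomial σ F, conL F p (expL F p q) = q := by
    intro q
    induction q using MvPolynomial.induction_on' with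
    | add f g hf hg => rw [_root_.map_add, _root_.map_add, hf, hg]
    | monomial d c =>
      rw [expL_monomial, conL_monomial]
      have : Finsupp.mapRange (· / p) (Nat.zero_div p) (p • d) = d := by
        ext i
        rw [Finsupp.mapRange_apply, Finsupp.smul_apply, smul_eq_mul,
          Nat.mul_div_cancel_left _ hp]
      rw [this]
  intro q1 q2 h
  rw [← key q1, ← key q2, h]

theorem expL_mul_X {σ : Type*} (p : ℕ) (q : MvPolynomial σ F) (s : σ) :
    expL F p (q * X s) = expL F p q * X s ^ p := by
  induction q using MvPolynomial.induction_on' with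
  | add f g hf hg => rw [_root_.map_add, add_mul, _root_.map_add, hf, hg, add_mul]
  | monomial d c =>
    rw [show (monomial d c : MvPolynomial σ F) * X s = monomial (d + Finsupp.single s 1) c by
      rw [monomial_add_single, pow_one], expL_monomial, expL_monomial,
      show p • (d + Finsupp.single s 1) = p • d + Finsupp.single s p by
        rw [smul_add, Finsupp.smul_single, smul_eq_mul, mul_one],
      monomial_add_single]

theorem expL_C {σ : Type*} (p : ℕ) (c : F) :
    expL F p (C c : MvPolynomial σ F) = C c := by
  rw [← monomial_zero', expL_monomial, smul_zero]

/-- a polynomial all of whose partial derivatives vanish, over a field of characteristic `p`,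
is a polynomial in the `p`-th powers of the variables -/
theorem exists_expL {σ : Type*} {p : ℕ} [CharP F p] (hp : 0 < p) (q : MvPolynomial σ F)
    (h : ∀ s, pderiv s q = 0) : ∃ q', expL F p q' = q := by
  classical
  have key : ∀ (s : σ) (d : σ →₀ ℕ), 1 ≤ d s →
      coeff (d - Finsupp.single s 1) (pderiv s q) = (d s : F) * coeff d q := by
    intro s d hds
    conv_lhs => rw [← support_sum_monomial_coeff q]
    rw [map_sum, coeff_sum]
    have hstep : ∀ u ∈ q.support, u ≠ d →
        coeff (d - Finsupp.single s 1) (pderiv s (monomial u (coeff u q))) = 0 := by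
      intro u hu hud
      rw [pderiv_monomial, coeff_monomial]
      rcases Nat.eq_zero_or_pos (u s) with h0 | h1
      · rw [h0]
        split <;> simp
      · rw [if_neg]
        intro heq
        apply hud
        ext a
        have ha := DFunLike.congr_fun heq a
        rw [Finsupp.tsub_apply, Finsupp.tsub_apply] at ha
        by_cases has : a = s
        · subst has
          rw [Finsupp.single_apply, if_pos rfl] at ha
          omega
        · rw [Finsupp.single_apply, if_neg (fun hh => has hh.symm)] at ha
          omega
    rw [Finset.sum_eq_single d hstep (fun hd => by
      simp [notMem_support_iff.mp hd])]
    rw [pderiv_monomial, coeff_monomial, if_pos rfl, mul_comm]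
  have hdvd : ∀ d ∈ q.support, ∀ s, p ∣ d s := by
    intro d hd s
    rcases Nat.eq_zero_or_pos (d s) with h0 | h1
    · rw [h0]; exact dvd_zero p
    · have hc := key s d h1
      rw [h s, coeff_zero] at hc
      rcases mul_eq_zero.mp hc.symm with hc1 | hc2
      · exact (CharP.cast_eq_zero_iff F p (d s)).mp hc1
      · exact absurd hc2 (mem_support_iff.mp hd)
  refine ⟨∑ d ∈ q.support, monomial (Finsupp.mapRange (· / p) (Nat.zero_div p) d) (coeff d q),
    ?_⟩
  rw [map_sum]
  conv_rhs => rw [← support_sum_monomial_coeff q]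
  refine Finset.sum_congr rfl fun d hd => ?_
  rw [expL_monomial]
  have : p • Finsupp.mapRange (· / p) (Nat.zero_div p) d = d := by
    ext a
    rw [Finsupp.smul_apply, Finsupp.mapRange_apply, smul_eq_mul,
      Nat.mul_div_cancel' (hdvd d hd a)]
  rw [this]

theorem Ψ_C (c : F) :
    Ψ F n (C c : MvPolynomial (Fin n ⊕ Fin n) F) = algebraMap F (WeylAlgebra F n) c := by
  rw [← monomial_zero', Ψ_monomial, Nmon]
  have hL : dL n (0 : (Fin n ⊕ Fin n) →₀ ℕ) = 0 := by ext i; simp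
  have hR : dR n (0 : (Fin n ⊕ Fin n) →₀ ℕ) = 0 := by ext i; simp
  rw [hL, hR, monomial_zero', C_1, _root_.map_one, _root_.map_one, one_mul,
    Algebra.algebraMap_eq_smul_one]

end Expand

end WeylCenter

open WeylCenter MvPolynomial

/-- In characteristic `p > 0`, the `2n` central elements `x₁ᵖ,…,xₙᵖ, y₁ᵖ,…,yₙᵖ` of the Weyl
algebra `A_n(F)` are algebraically independent over `F`; consequently the center `Z(A_n(F))`
is isomorphic, as an `F`-algebra, to a polynomial ring over `F` in `2n` variables. -/
theorem center_weylAlgebra_algebraicallyIndependent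
    (p n : ℕ) (hn : 1 ≤ n) (F : Type*) [Field F] [CharP F p] (hp : 0 < p) :
    ∃ hc : ∀ s : Fin n ⊕ Fin n, weylPthPowers F n p s ∈ Subalgebra.center F (WeylAlgebra F n),
      AlgebraicIndependent F
        (fun s : Fin n ⊕ Fin n =>
          (⟨weylPthPowers F n p s, hc s⟩ : Subalgebra.center F (WeylAlgebra F n))) ∧
      Nonempty (↥(Subalgebra.center F (WeylAlgebra F n)) ≃ₐ[F] MvPolynomial (Fin (2 * n)) F) := by
  classical
  have hc : ∀ s : Fin n ⊕ Fin n,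
      weylPthPowers F n p s ∈ Subalgebra.center F (WeylAlgebra F n) := by
    intro s
    cases s with
    | inl i => exact wX_pow_mem_center p i
    | inr i => exact wY_pow_mem_center p i
  set vC : Fin n ⊕ Fin n → (Subalgebra.center F (WeylAlgebra F n)) :=
    fun s => ⟨weylPthPowers F n p s, hc s⟩ with hvC
  have hval : ∀ q : MvPolynomial (Fin n ⊕ Fin n) F,
      ((MvPolynomial.aeval vC q : Subalgebra.center F (WeylAlgebra F n)) : WeylAlgebra F n)
        = Ψ F n (expL F p q) := by
    intro q
    induction q using MvPolynomial.induction_on with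
    | C c =>
      rw [aeval_C, expL_C, Ψ_C]
      simp
    | add f g hf hg =>
      rw [_root_.map_add, _root_.map_add, _root_.map_add, ← hf, ← hg]
      simp
    | mul_X f s hf =>
      rw [_root_.map_mul, aeval_X, MulMemClass.coe_mul, hf, expL_mul_X, hvC]
      cases s with
      | inl j =>
        have hcen := Subalgebra.mem_center_iff.mp (hc (Sum.inl j)) (Ψ F n (expL F p f))
        rw [show weylPthPowers F n p (Sum.inl j) = wX F n j ^ p from rfl] at hcen
        show Ψ F n (expL F p f) * wX F n j ^ p = _
        rw [hcen, wXpow_mul_Ψ, mul_comm (X (Sum.inl j) ^ p) (expL F p f)]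
      | inr j =>
        show Ψ F n (expL F p f) * wY F n j ^ p = _
        rw [Ψ_mul_wYpow, mul_comm (X (Sum.inr j) ^ p) (expL F p f)]
  have hinj : Function.Injective (MvPolynomial.aeval (R := F) vC) := by
    intro q1 q2 h
    have h2 : Ψ F n (expL F p q1) = Ψ F n (expL F p q2) := by
      rw [← hval, ← hval, h]
    exact expL_injective hp (Ψ_injective h2)
  have hsurj : Function.Surjective (MvPolynomial.aeval (R := F) vC) := by
    rintro ⟨z, hz⟩
    obtain ⟨q, hq⟩ := Ψ_surjective (F := F) (n := n) z
    have hcen := Subalgebra.mem_center_iff.mp hz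
    have hdy : ∀ j, pderiv (Sum.inl j) q = 0 := by
      intro j
      have h2 := wY_mul_Ψ j q
      have h3 := Ψ_mul_wYpow j 1 q
      rw [hq] at h2 h3
      rw [pow_one, pow_one] at h3
      have h4 : Ψ F n (X (Sum.inr j) * q + pderiv (Sum.inl j) q)
          = Ψ F n (X (Sum.inr j) * q) := by
        rw [← h2, ← h3, hcen (wY F n j)]
      have h5 := Ψ_injective h4
      exact add_eq_left.mp h5
    have hdx : ∀ j, pderiv (Sum.inr j) q = 0 := by
      intro j
      have h2 := Ψ_mul_wX j q
      have h3 := wXpow_mul_Ψ j 1 q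
      rw [hq] at h2 h3
      rw [pow_one, pow_one] at h3
      have h4 : Ψ F n (X (Sum.inl j) * q + pderiv (Sum.inr j) q)
          = Ψ F n (X (Sum.inl j) * q) := by
        rw [← h2, ← h3, hcen (wX F n j)]
      have h5 := Ψ_injective h4
      exact add_eq_left.mp h5
    obtain ⟨q', hq'⟩ := exists_expL hp q (fun s => by
      cases s with
      | inl j => exact hdy j
      | inr j => exact hdx j)
    refine ⟨q', Subtype.ext ?_⟩
    rw [hval, hq', hq]
  refine ⟨hc, hinj, ⟨((AlgEquiv.ofBijective (MvPolynomial.aeval (R := F) vC) ⟨hinj, hsurj⟩).symm.trans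
    (MvPolynomial.renameEquiv F (finSumFinEquiv.trans (finCongr (two_mul n).symm))))⟩⟩
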